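/- (Lemma 2 of the paper, forward direction.) Fix n ≥ 1, positive integers p_1,…,p_n with p = p_1 + ⋯ + p_n, reals ρ_1,…,ρ_n > 0, κ > 0, set α_i = κρ_i, and let V = diag(V_1,…,V_n) be block-diagonal symmetric positive definite with V_i of size p_i × p_i. Let E_i denote the p × p_i matrix whose i-th block is I_{p_i} and all other blocks are zero. Let D be a nonzero real q × p matrix with column blocks D_i satisfying ρ_i‖D_i‖₂ = Δ for all i, where Δ = max_j ρ_j‖D_j‖₂, and set Π = V⁻¹ − V⁻¹(V⁻¹ + DᵀD/(κΔ)²)⁻¹V⁻¹. Then V − V Π V is positive definite, and for every 1 ≤ i ≤ n the block matrix [[I_{p_i}/α_i² + V_i⁻¹, E_iᵀ], [E_i, V − V Π V]] is positive semidefinite but not positive definite. -/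

import Mathlib

open Matrix

/-- The induced 2-norm (largest singular value) of a real matrix. -/
noncomputable def sNorm {m n : Type*} [Fintype m] [Fintype n] [DecidableEq n]
    (M : Matrix m n ℝ) : ℝ :=
  ‖LinearMap.toContinuousLinearMap (Matrix.toEuclideanLin M)‖

/-- The `i`-th column block of a matrix with columns indexed by `(i : Fin n) × Fin (p i)`. -/
def blk {q n : ℕ} {p : Fin n → ℕ} (D : Matrix (Fin q) ((i : Fin n) × Fin (p i)) ℝ)
    (i : Fin n) : Matrix (Fin q) (Fin (p i)) ℝ :=
  Matrix.of fun r j => D r ⟨i, j⟩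

/-- The tall matrix `E_i` whose `i`-th block is `I_{p_i}` and other blocks are zero. -/
def Emat {n : ℕ} (p : Fin n → ℕ) (i : Fin n) :
    Matrix ((j : Fin n) × Fin (p j)) (Fin (p i)) ℝ :=
  Matrix.of fun x l => if x = ⟨i, l⟩ then 1 else 0

lemma normsq_bridge {q m : ℕ} (M : Matrix (Fin q) (Fin m) ℝ) (v : EuclideanSpace ℝ (Fin m)) :
    ‖(LinearMap.toContinuousLinearMap (Matrix.toEuclideanLin M)) v‖ ^ 2
      = (M *ᵥ (WithLp.equiv 2 _ v)) ⬝ᵥ (M *ᵥ (WithLp.equiv 2 _ v)) := by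
  rw [← real_inner_self_eq_norm_sq]
  simp [LinearMap.coe_toContinuousLinearMap', Matrix.toEuclideanLin_apply,
    PiLp.inner_apply, dotProduct]
  rw [EuclideanSpace.real_norm_sq_eq]; simp [sq]

lemma normsq_self {m : ℕ} (v : EuclideanSpace ℝ (Fin m)) :
    ‖v‖ ^ 2 = (WithLp.equiv 2 _ v) ⬝ᵥ (WithLp.equiv 2 _ v) := by
  rw [← real_inner_self_eq_norm_sq]
  simp [PiLp.inner_apply, dotProduct]
  rw [EuclideanSpace.real_norm_sq_eq]; simp [sq]

lemma sNorm_bound {q m : ℕ} (M : Matrix (Fin q) (Fin m) ℝ) (x : Fin m → ℝ) :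
    (M *ᵥ x) ⬝ᵥ (M *ᵥ x) ≤ sNorm M ^ 2 * (x ⬝ᵥ x) := by
  set f := LinearMap.toContinuousLinearMap (Matrix.toEuclideanLin M)
  set v : EuclideanSpace ℝ (Fin m) := (WithLp.equiv 2 _).symm x
  have hx : WithLp.equiv 2 (Fin m → ℝ) v = x := rfl
  have h1 := normsq_bridge M v
  have h2 := normsq_self v
  rw [hx] at h1 h2
  rw [← h1, ← h2, sNorm]
  calc ‖f v‖ ^ 2 ≤ (‖f‖ * ‖v‖) ^ 2 :=
        pow_le_pow_left₀ (norm_nonneg _) (f.le_opNorm v) 2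
    _ = ‖f‖ ^ 2 * ‖v‖ ^ 2 := by ring

lemma sNorm_attained {q m : ℕ} (hm : 0 < m) (M : Matrix (Fin q) (Fin m) ℝ) :
    ∃ x : Fin m → ℝ, x ≠ 0 ∧ (M *ᵥ x) ⬝ᵥ (M *ᵥ x) = sNorm M ^ 2 * (x ⬝ᵥ x) := by
  set f := LinearMap.toContinuousLinearMap (Matrix.toEuclideanLin M) with hf
  have : Nontrivial (EuclideanSpace ℝ (Fin m)) := by
    refine ⟨(WithLp.equiv 2 _).symm (Pi.single ⟨0, hm⟩ 1), 0, fun h => ?_⟩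
    have := congrFun (congrArg (WithLp.equiv 2 (Fin m → ℝ)) h) ⟨0, hm⟩
    simp [Pi.single_eq_same] at this
  have hsph : (Metric.sphere (0 : EuclideanSpace ℝ (Fin m)) 1).Nonempty :=
    NormedSpace.sphere_nonempty.mpr zero_le_one
  obtain ⟨v₀, hv₀s, hmax⟩ := (isCompact_sphere (0 : EuclideanSpace ℝ (Fin m)) 1).exists_isMaxOn
    hsph (f.continuous.norm.continuousOn)
  have hv₀ : ‖v₀‖ = 1 := by simpa using hv₀s
  have hnorm : ‖f‖ = ‖f v₀‖ := by
    apply le_antisymm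
    · apply f.opNorm_le_bound (norm_nonneg _)
      intro v
      rcases eq_or_ne v 0 with rfl | hv
      · simp
      · have hvn : ‖v‖ ≠ 0 := norm_ne_zero_iff.mpr hv
        have hu : (‖v‖⁻¹ • v) ∈ Metric.sphere (0 : EuclideanSpace ℝ (Fin m)) 1 := by
          simp [norm_smul, abs_of_nonneg (inv_nonneg.mpr (norm_nonneg v)), inv_mul_cancel₀ hvn]
        have := hmax hu
        rw [IsMaxOn, IsMaxFilter] at hmax
        simp only [Set.mem_setOf_eq, _root_.map_smul, norm_smul, norm_inv, norm_norm] at this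
        calc ‖f v‖ = ‖v‖ * (‖v‖⁻¹ * ‖f v‖) := by field_simp
          _ ≤ ‖v‖ * ‖f v₀‖ := by
              apply mul_le_mul_of_nonneg_left _ (norm_nonneg v)
              simpa [mul_comm] using this
          _ = ‖f v₀‖ * ‖v‖ := mul_comm _ _
    · simpa [hv₀] using f.le_opNorm v₀
  refine ⟨WithLp.equiv 2 _ v₀, ?_, ?_⟩
  · intro h
    apply one_ne_zero (α := ℝ)
    rw [← hv₀]
    have : v₀ = 0 := by
      apply (WithLp.equiv 2 (Fin m → ℝ)).injective
      simpa using h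
    simp [this]
  · have h1 := normsq_bridge M v₀
    have h2 := normsq_self v₀
    rw [← h1, ← h2, sNorm, ← hf, ← hnorm, hv₀]
    ring

lemma sNorm_pos {q m : ℕ} {M : Matrix (Fin q) (Fin m) ℝ} (h : M ≠ 0) : 0 < sNorm M := by
  rw [sNorm, norm_pos_iff]
  intro hf
  apply h
  have : Matrix.toEuclideanLin M = 0 := by
    have := congrArg ContinuousLinearMap.toLinearMap hf
    rwa [LinearMap.coe_toContinuousLinearMap] at this
  simpa using (map_eq_zero_iff (Matrix.toEuclideanLin) (LinearEquiv.injective _)).mp this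

lemma posDef_blockDiagonal' {n : ℕ} {p : Fin n → ℕ} (Vb : ∀ i, Matrix (Fin (p i)) (Fin (p i)) ℝ)
    (h : ∀ i, (Vb i).PosDef) : (Matrix.blockDiagonal' Vb).PosDef := by
  refine Matrix.PosDef.of_dotProduct_mulVec_pos ?_ ?_
  · rw [Matrix.IsHermitian, Matrix.blockDiagonal'_conjTranspose]
    exact congrArg _ (funext fun i => (h i).1)
  · intro x hx
    have hmv : ∀ (ik : (i : Fin n) × Fin (p i)), (Matrix.blockDiagonal' Vb *ᵥ x) ik
        = (Vb ik.1 *ᵥ fun j => x ⟨ik.1, j⟩) ik.2 := by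
      rintro ⟨i, k⟩
      simp only [Matrix.mulVec, dotProduct, ← Finset.univ_sigma_univ, Finset.sum_sigma]
      rw [Finset.sum_eq_single i]
      · simp [Matrix.blockDiagonal'_apply_eq]
      · intro j _ hj
        apply Finset.sum_eq_zero
        intro l _
        rw [Matrix.blockDiagonal'_apply_ne _ _ _ (Ne.symm hj), zero_mul]
      · simp
    have hdp : dotProduct (star x) (Matrix.blockDiagonal' Vb *ᵥ x)
        = ∑ i : Fin n, dotProduct (star fun j => x ⟨i, j⟩) (Vb i *ᵥ fun j => x ⟨i, j⟩) := by
      simp only [dotProduct, ← Finset.univ_sigma_univ, Finset.sum_sigma]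
      exact Finset.sum_congr rfl fun i _ => Finset.sum_congr rfl fun k _ => by
        rw [hmv ⟨i, k⟩]; rfl
    rw [hdp]
    obtain ⟨⟨i₀, k₀⟩, hik⟩ := Function.ne_iff.mp hx
    have : ∀ i : Fin n, 0 ≤ dotProduct (star fun j => x ⟨i, j⟩) (Vb i *ᵥ fun j => x ⟨i, j⟩) :=
      fun i => (h i).posSemidef.dotProduct_mulVec_nonneg _
    refine Finset.sum_pos' (fun i _ => this i) ⟨i₀, Finset.mem_univ _, ?_⟩
    exact (h i₀).dotProduct_mulVec_pos (Function.ne_iff.mpr ⟨k₀, hik⟩)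

lemma inv_blockDiagonal' {n : ℕ} {p : Fin n → ℕ} (Vb : ∀ i, Matrix (Fin (p i)) (Fin (p i)) ℝ)
    (h : ∀ i, IsUnit (Vb i).det) :
    (Matrix.blockDiagonal' Vb)⁻¹ = Matrix.blockDiagonal' (fun i => (Vb i)⁻¹) := by
  rw [Matrix.inv_eq_left_inv]
  rw [← Matrix.blockDiagonal'_mul]
  rw [show (fun i => (Vb i)⁻¹ * Vb i) = fun i => (1 : Matrix (Fin (p i)) (Fin (p i)) ℝ) from
    funext fun i => Matrix.nonsing_inv_mul _ (h i)]
  exact Matrix.blockDiagonal'_one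

lemma sandwich {n : ℕ} {p : Fin n → ℕ} (i : Fin n)
    (W : Matrix ((j : Fin n) × Fin (p j)) ((j : Fin n) × Fin (p j)) ℝ) :
    (Emat p i)ᵀ * W * Emat p i = Matrix.of fun k l => W ⟨i, k⟩ ⟨i, l⟩ := by
  ext k l
  simp only [Emat, Matrix.mul_apply, Matrix.transpose_apply, Matrix.of_apply]
  simp [ite_mul, Finset.sum_ite_eq, Finset.sum_ite_eq']

/-- **Lemma 2 of the paper, forward direction.** If all blocks of `D ≠ 0` saturate the
sensitivity, `ρ_i‖D_i‖₂ = Δ` for all `i`, and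
`Π = V⁻¹ − V⁻¹(V⁻¹ + DᵀD/(κΔ)²)⁻¹V⁻¹`, then `V − VΠV ≻ 0` and for every `i` the block
matrix `[[I/α_i² + V_i⁻¹, E_iᵀ], [E_i, V − VΠV]]` is PSD but not positive definite. -/
theorem stmt_8 {n q : ℕ} (hn : 1 ≤ n) (p : Fin n → ℕ) (hp : ∀ i, 0 < p i)
    (ρ : Fin n → ℝ) (hρ : ∀ i, 0 < ρ i) (κ : ℝ) (hκ : 0 < κ)
    (α : Fin n → ℝ) (hα : ∀ i, α i = κ * ρ i)
    (Vb : ∀ i : Fin n, Matrix (Fin (p i)) (Fin (p i)) ℝ)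
    (hVb : ∀ i, (Vb i).PosDef)
    (V : Matrix ((i : Fin n) × Fin (p i)) ((i : Fin n) × Fin (p i)) ℝ)
    (hV : V = Matrix.blockDiagonal' Vb)
    (D : Matrix (Fin q) ((i : Fin n) × Fin (p i)) ℝ) (hD : D ≠ 0)
    (Δ : ℝ) (hΔ : Δ = ⨆ j : Fin n, ρ j * sNorm (blk D j))
    (hblocks : ∀ i : Fin n, ρ i * sNorm (blk D i) = Δ)
    (Pi : Matrix ((i : Fin n) × Fin (p i)) ((i : Fin n) × Fin (p i)) ℝ)
    (hPi : Pi = V⁻¹ - V⁻¹ * (V⁻¹ + ((κ * Δ) ^ 2)⁻¹ • (Dᵀ * D))⁻¹ * V⁻¹) :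
    (V - V * Pi * V).PosDef ∧
    ∀ i : Fin n,
      (Matrix.fromBlocks
          (((α i) ^ 2)⁻¹ • (1 : Matrix (Fin (p i)) (Fin (p i)) ℝ) + (Vb i)⁻¹)
          (Emat p i)ᵀ (Emat p i) (V - V * Pi * V)).PosSemidef ∧
      ¬ (Matrix.fromBlocks
          (((α i) ^ 2)⁻¹ • (1 : Matrix (Fin (p i)) (Fin (p i)) ℝ) + (Vb i)⁻¹)
          (Emat p i)ᵀ (Emat p i) (V - V * Pi * V)).PosDef := by
  -- Δ is positive
  have hΔpos : 0 < Δ := by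
    obtain ⟨r, hr⟩ := Function.ne_iff.mp hD
    obtain ⟨x, hx⟩ := Function.ne_iff.mp hr
    have hblk : blk D x.1 ≠ 0 := by
      intro h
      exact hx (by simpa [blk] using congrFun (congrFun h r) x.2)
    rw [← hblocks x.1]
    exact mul_pos (hρ x.1) (sNorm_pos hblk)
  set c : ℝ := (κ * Δ) ^ 2 with hc
  have hcpos : 0 < c := by positivity
  -- D transpose facts
  have hDt : Dᴴ = Dᵀ := by ext a b; simp [Matrix.conjTranspose_apply]
  -- the matrix W
  set W : Matrix ((i : Fin n) × Fin (p i)) ((i : Fin n) × Fin (p i)) ℝ :=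
    V⁻¹ + c⁻¹ • (Dᵀ * D) with hW
  have hVpd : V.PosDef := hV ▸ posDef_blockDiagonal' Vb hVb
  have hVdet : IsUnit V.det := (Matrix.isUnit_iff_isUnit_det V).mp hVpd.isUnit
  have hDtD : (Dᵀ * D).PosSemidef := hDt ▸ Matrix.posSemidef_conjTranspose_mul_self D
  have hsmul : (c⁻¹ • (Dᵀ * D)).PosSemidef := by
    refine Matrix.PosSemidef.of_dotProduct_mulVec_nonneg ?_ (fun x => ?_)
    · rw [Matrix.IsHermitian, Matrix.conjTranspose_smul, hDtD.1]
      simp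
    · rw [Matrix.smul_mulVec, dotProduct_smul, smul_eq_mul]
      exact mul_nonneg (inv_nonneg.mpr hcpos.le) (hDtD.dotProduct_mulVec_nonneg x)
  have hWpd : W.PosDef := hVpd.inv.add_posSemidef hsmul
  have hWdet : IsUnit W.det := (Matrix.isUnit_iff_isUnit_det W).mp hWpd.isUnit
  -- the key identity
  have key : V - V * Pi * V = W⁻¹ := by
    rw [hPi]
    have h1 : V * V⁻¹ = 1 := Matrix.mul_nonsing_inv V hVdet
    have h2 : V⁻¹ * V = 1 := Matrix.nonsing_inv_mul V hVdet
    rw [Matrix.mul_sub, Matrix.sub_mul, h1, Matrix.one_mul,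
      ← Matrix.mul_assoc, ← Matrix.mul_assoc, h1, Matrix.one_mul,
      Matrix.mul_assoc, h2, Matrix.mul_one, sub_sub_cancel]
  rw [key]
  refine ⟨hWpd.inv, fun i => ?_⟩
  haveI : Invertible W := hWpd.isUnit.invertible
  haveI : Invertible W⁻¹ := hWpd.inv.isUnit.invertible
  set A : Matrix (Fin (p i)) (Fin (p i)) ℝ :=
    ((α i) ^ 2)⁻¹ • (1 : Matrix (Fin (p i)) (Fin (p i)) ℝ) + (Vb i)⁻¹ with hA
  set M : Matrix (Fin q) (Fin (p i)) ℝ := blk D i with hM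
  have hE : ((Emat p i)ᵀ)ᴴ = Emat p i := by
    ext a b; simp [Matrix.conjTranspose_apply]
  -- the sandwiched Schur complement
  have hsand : (Emat p i)ᵀ * W * Emat p i = (Vb i)⁻¹ + c⁻¹ • (Mᵀ * M) := by
    rw [sandwich]
    ext k l
    have hVinv : V⁻¹ = Matrix.blockDiagonal' (fun j => (Vb j)⁻¹) := by
      rw [hV]; exact inv_blockDiagonal' Vb fun j =>
        (Matrix.isUnit_iff_isUnit_det _).mp (hVb j).isUnit
    have h1 : V⁻¹ ⟨i, k⟩ ⟨i, l⟩ = (Vb i)⁻¹ k l := by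
      rw [hVinv, Matrix.blockDiagonal'_apply_eq]
    have h2 : (Dᵀ * D) ⟨i, k⟩ ⟨i, l⟩ = (Mᵀ * M) k l := by
      simp [Matrix.mul_apply, hM, blk]
    simp only [Matrix.of_apply, hW, Matrix.add_apply, Matrix.smul_apply, h1, h2, smul_eq_mul]
  have hSchur : A - (Emat p i)ᵀ * W * Emat p i
      = ((α i) ^ 2)⁻¹ • (1 : Matrix (Fin (p i)) (Fin (p i)) ℝ) - c⁻¹ • (Mᵀ * M) := by
    rw [hsand, hA]; abel
  -- arithmetic: c⁻¹ * sNorm M ^ 2 = (α i ^ 2)⁻¹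
  have hsn : sNorm M = Δ / ρ i := by
    rw [eq_div_iff (hρ i).ne', mul_comm]
    exact hblocks i
  have harith : c⁻¹ * sNorm M ^ 2 = ((α i) ^ 2)⁻¹ := by
    have h1 : Δ ≠ 0 := hΔpos.ne'
    have h2 : κ ≠ 0 := hκ.ne'
    have h3 : ρ i ≠ 0 := (hρ i).ne'
    rw [hsn, hα i, hc]
    field_simp
  -- quadratic form of the Schur complement
  have hform : ∀ x : Fin (p i) → ℝ,
      dotProduct x ((((α i) ^ 2)⁻¹ • (1 : Matrix (Fin (p i)) (Fin (p i)) ℝ)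
        - c⁻¹ • (Mᵀ * M)) *ᵥ x)
      = ((α i) ^ 2)⁻¹ * (x ⬝ᵥ x) - c⁻¹ * ((M *ᵥ x) ⬝ᵥ (M *ᵥ x)) := by
    intro x
    rw [Matrix.sub_mulVec, dotProduct_sub, Matrix.smul_mulVec,
      Matrix.smul_mulVec, Matrix.one_mulVec, dotProduct_smul,
      dotProduct_smul, ← Matrix.mulVec_mulVec, Matrix.dotProduct_mulVec x Mᵀ,
      Matrix.vecMul_transpose, smul_eq_mul, smul_eq_mul]
  have hMherm : ((((α i) ^ 2)⁻¹ • (1 : Matrix (Fin (p i)) (Fin (p i)) ℝ)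
      - c⁻¹ • (Mᵀ * M))).IsHermitian := by
    have hMt : Mᴴ = Mᵀ := by ext a b; simp [Matrix.conjTranspose_apply]
    have h1 : (Mᵀ * M).IsHermitian := hMt ▸ (Matrix.posSemidef_conjTranspose_mul_self M).1
    refine Matrix.IsHermitian.sub ?_ ?_
    · rw [Matrix.IsHermitian, Matrix.conjTranspose_smul, Matrix.isHermitian_one.eq]
      simp
    · rw [Matrix.IsHermitian, Matrix.conjTranspose_smul, h1.eq]
      simp
  have hSpsd : (A - (Emat p i)ᵀ * W * Emat p i).PosSemidef := by
    rw [hSchur]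
    refine Matrix.PosSemidef.of_dotProduct_mulVec_nonneg hMherm (fun x => ?_)
    have hst : star x = x := by ext j; simp
    rw [hst, hform x]
    have hb := sNorm_bound M x
    have : c⁻¹ * ((M *ᵥ x) ⬝ᵥ (M *ᵥ x)) ≤ c⁻¹ * (sNorm M ^ 2 * (x ⬝ᵥ x)) :=
      mul_le_mul_of_nonneg_left hb (inv_nonneg.mpr hcpos.le)
    have heq : c⁻¹ * (sNorm M ^ 2 * (x ⬝ᵥ x)) = ((α i) ^ 2)⁻¹ * (x ⬝ᵥ x) := by
      rw [← mul_assoc, harith]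
    linarith
  constructor
  · -- PSD
    have hfb : Matrix.fromBlocks A (Emat p i)ᵀ (Emat p i) W⁻¹
        = Matrix.fromBlocks A (Emat p i)ᵀ ((Emat p i)ᵀ)ᴴ W⁻¹ := by rw [hE]
    rw [hfb, Matrix.PosDef.fromBlocks₂₂ A ((Emat p i)ᵀ) hWpd.inv,
      Matrix.nonsing_inv_nonsing_inv W hWdet, hE]
    exact hSpsd
  · -- not PosDef
    intro hpd
    obtain ⟨x₀, hx₀, hatt⟩ := sNorm_attained (hp i) M
    set y₀ : ((j : Fin n) × Fin (p j)) → ℝ := -(((W⁻¹)⁻¹ * Emat p i) *ᵥ x₀) with hy₀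
    have hsc := Matrix.schur_complement_eq₂₂ (α := ℝ) A ((Emat p i)ᵀ) x₀ y₀ hWpd.inv.1
    rw [hE] at hsc
    rw [show ((W⁻¹)⁻¹ * Emat p i) *ᵥ x₀ + y₀ = 0 from by rw [hy₀]; exact add_neg_cancel _]
      at hsc
    have hzero : (star ((0 : ((j : Fin n) × Fin (p j)) → ℝ))) ᵥ* W⁻¹ ⬝ᵥ
        (0 : ((j : Fin n) × Fin (p j)) → ℝ) = 0 := by simp
    rw [hzero, zero_add] at hsc
    -- the Schur term vanishes at x₀
    have hSval : (star x₀) ᵥ* (A - (Emat p i)ᵀ * (W⁻¹)⁻¹ * Emat p i) ⬝ᵥ x₀ = 0 := by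
      rw [Matrix.nonsing_inv_nonsing_inv W hWdet]
      have hst : star x₀ = x₀ := by ext j; simp
      rw [hst, ← Matrix.dotProduct_mulVec, hSchur, hform x₀, hatt, ← mul_assoc, harith,
        sub_self]
    rw [hSval] at hsc
    -- contradiction with positive definiteness
    have hvne : (x₀ ⊕ᵥ y₀ : (Fin (p i) ⊕ ((j : Fin n) × Fin (p j))) → ℝ) ≠ 0 := by
      intro h
      apply hx₀
      ext k
      exact congrFun h (Sum.inl k)
    have hpos := hpd.dotProduct_mulVec_pos hvne
    rw [Matrix.dotProduct_mulVec] at hpos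
    rw [hsc] at hpos
    exact lt_irrefl 0 hpos
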